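/- Let 1 ∈ A ⊂ B be an inclusion of unital C*-algebras. If there exist elements v_1, ..., v_n ∈ B such that B = Av_1 + Av_2 + ... + Av_n, then tsr(B) ≤ n · tsr(A), where tsr denotes topological stable rank. -/

import Mathlib

/-- `Lg R n` is the set of n-tuples generating `R` as a left ideal. -/
def Lg (R : Type*) [Ring R] (n : ℕ) : Set (Fin n → R) :=
  {b | ∃ c : Fin n → R, ∑ i, c i * b i = 1}

/-- Topological stable rank: the least `n` such that `Lg R n` is dense in `Rⁿ`
(as an extended natural number; `⊤` if no such `n` exists). -/
noncomputable def tsr (R : Type*) [Ring R] [TopologicalSpace R] : ℕ∞ :=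
  sInf {N : ℕ∞ | ∃ n : ℕ, (n : ℕ∞) = N ∧ Dense (Lg R n)}

section Aux

theorem mem_closure_of_mapsTo {X Y : Type*} [TopologicalSpace X] [TopologicalSpace Y]
    {s : Set X} {t : Set Y} (hs : Dense s) {f : X → Y} (hf : Continuous f)
    (hm : Set.MapsTo f s t) (x : X) : f x ∈ closure t := by
  have h1 : f x ∈ closure (f '' s) := image_closure_subset_closure_image hf ⟨x, hs x, rfl⟩
  exact closure_mono hm.image_subset h1

variable {R : Type*} [Ring R] [TopologicalSpace R]

theorem dense_Lg_of_le {m p : ℕ} (hm : Dense (Lg R m)) (hmp : m ≤ p) : Dense (Lg R p) := by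
  obtain ⟨d, rfl⟩ := Nat.exists_eq_add_of_le hmp
  intro b
  have hf : Continuous (fun (a : Fin m → R) => Fin.append a (fun j => b (Fin.natAdd m j))) := by
    refine continuous_pi fun i => ?_
    induction i using Fin.addCases with
    | left i => simpa [Fin.append_left] using continuous_apply i
    | right i => simpa [Fin.append_right] using continuous_const
  have hmaps : Set.MapsTo (fun (a : Fin m → R) => Fin.append a (fun j => b (Fin.natAdd m j)))
      (Lg R m) (Lg R (m + d)) := by
    rintro a ⟨c, hc⟩
    refine ⟨Fin.append c 0, ?_⟩
    rw [Fin.sum_univ_add]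
    simp [Fin.append_left, Fin.append_right, hc]
  have hb : (fun (a : Fin m → R) => Fin.append a (fun j => b (Fin.natAdd m j)))
      (fun i => b (Fin.castAdd d i)) = b := by
    funext i
    induction i using Fin.addCases with
    | left i => simp [Fin.append_left]
    | right i => simp [Fin.append_right]
  exact hb ▸ mem_closure_of_mapsTo hm hf hmaps _

end Aux

/-- Left-invertible `p × q` matrices. -/
def LI (R : Type*) [Ring R] (p q : ℕ) : Set (Matrix (Fin p) (Fin q) R) :=
  {T | ∃ S : Matrix (Fin q) (Fin p) R, S * T = 1}

section Mat

variable {R : Type*} [Ring R]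

/-- Matrix supported on row `0`. -/
def rowU {k : ℕ} (w : Fin (k + 1) → R) : Matrix (Fin (k + 1)) (Fin (k + 1)) R :=
  Matrix.of fun i j => if i = 0 then w j else 0

/-- Matrix supported on column `0`. -/
def colU {k : ℕ} (u : Fin (k + 1) → R) : Matrix (Fin (k + 1)) (Fin (k + 1)) R :=
  Matrix.of fun i j => if j = 0 then u i else 0

theorem rowU_mul {k n : ℕ} (w : Fin (k + 1) → R) (M : Matrix (Fin (k + 1)) (Fin n) R) (i j) :
    (rowU w * M) i j = if i = 0 then ∑ l, w l * M l j else 0 := by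
  simp [rowU, Matrix.mul_apply, ite_mul]

theorem mul_rowU {k n : ℕ} (M : Matrix (Fin n) (Fin (k + 1)) R) (x : Fin (k + 1) → R) (i j) :
    (M * rowU x) i j = M i 0 * x j := by
  simp [rowU, Matrix.mul_apply, mul_ite]

theorem colU_mul {k n : ℕ} (u : Fin (k + 1) → R) (M : Matrix (Fin (k + 1)) (Fin n) R) (i j) :
    (colU u * M) i j = u i * M 0 j := by
  simp [colU, Matrix.mul_apply, ite_mul]

theorem rowU_sq {k : ℕ} (w : Fin (k + 1) → R) (hw : w 0 = 0) : rowU w * rowU w = 0 := by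
  ext i j
  rw [rowU_mul]
  simp [rowU, ite_mul, hw]

theorem colU_sq {k : ℕ} (u : Fin (k + 1) → R) (hu : u 0 = 0) : colU u * colU u = 0 := by
  ext i j
  rw [colU_mul]
  simp [colU, hu]

theorem unit_of_sq_zero {n : ℕ} (N : Matrix (Fin n) (Fin n) R) (h : N * N = 0) :
    (1 + N) * (1 - N) = 1 ∧ (1 - N) * (1 + N) = 1 := by
  constructor
  · have : (1 + N) * (1 - N) = 1 - N * N := by noncomm_ring
    rw [this, h, sub_zero]
  · have : (1 - N) * (1 + N) = 1 - N * N := by noncomm_ring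
    rw [this, h, sub_zero]

variable [TopologicalSpace R] [IsTopologicalRing R]

theorem mem_closure_LI_conj {p q : ℕ} {T : Matrix (Fin p) (Fin q) R}
    (L L' : Matrix (Fin p) (Fin p) R) (W W' : Matrix (Fin q) (Fin q) R)
    (hLL' : L * L' = 1) (hL'L : L' * L = 1) (hWW' : W * W' = 1) (hW'W : W' * W = 1)
    (h : L * T * W ∈ closure (LI R p q)) : T ∈ closure (LI R p q) := by
  have hf : Continuous fun M : Matrix (Fin p) (Fin q) R => L' * M * W' := by
    have h1 : Continuous fun M : Matrix (Fin p) (Fin q) R => L' * M :=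
      Continuous.matrix_mul continuous_const continuous_id'
    exact Continuous.matrix_mul h1 continuous_const
  have hmaps : Set.MapsTo (fun M : Matrix (Fin p) (Fin q) R => L' * M * W')
      (LI R p q) (LI R p q) := by
    rintro M ⟨S, hS⟩
    refine ⟨W * S * L, ?_⟩
    have e1 : W * S * L * (L' * M * W') = W * S * (L * L') * M * W' := by
      simp only [Matrix.mul_assoc]
    rw [e1, hLL', Matrix.mul_one, Matrix.mul_assoc W S M, hS, Matrix.mul_one, hWW']
  have hT : L' * (L * T * W) * W' = T := by
    have e1 : L' * (L * T * W) * W' = L' * L * T * (W * W') := by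
      simp only [Matrix.mul_assoc]
    rw [e1, hL'L, hWW', Matrix.one_mul, Matrix.mul_one]
  have h2 : (fun M : Matrix (Fin p) (Fin q) R => L' * M * W') (L * T * W) ∈
      closure (LI R p q) := by
    have h1 : (fun M : Matrix (Fin p) (Fin q) R => L' * M * W') (L * T * W) ∈
        closure ((fun M : Matrix (Fin p) (Fin q) R => L' * M * W') '' LI R p q) :=
      image_closure_subset_closure_image hf (Set.mem_image_of_mem _ h)
    exact closure_mono hmaps.image_subset h1
  rw [← hT]
  exact h2

theorem subsingleton_matrix_fin_zero {α : Type*} {n : ℕ} (a b : Matrix (Fin 0) (Fin n) α) :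
    a = b := by
  funext i
  exact i.elim0

theorem dense_LI_zero (p : ℕ) : Dense (LI R p 0) := by
  have : LI R p 0 = Set.univ :=
    Set.eq_univ_of_forall fun T => ⟨0, by funext i; exact i.elim0⟩
  rw [this]
  exact dense_univ

theorem dense_LI_one {p : ℕ} (hp : Dense (Lg R p)) : Dense (LI R p 1) := by
  intro T
  have hf : Continuous fun (b : Fin p → R) => (Matrix.of fun i (_ : Fin 1) => b i) := by
    refine continuous_pi fun i => continuous_pi fun j => ?_
    exact continuous_apply i
  have hmaps : Set.MapsTo (fun (b : Fin p → R) => (Matrix.of fun i (_ : Fin 1) => b i))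
      (Lg R p) (LI R p 1) := by
    rintro b ⟨c, hc⟩
    refine ⟨Matrix.of fun (_ : Fin 1) k => c k, ?_⟩
    funext i j
    have hi : i = 0 := Subsingleton.elim i 0
    have hj : j = 0 := Subsingleton.elim j 0
    subst hi; subst hj
    simp [Matrix.mul_apply, Matrix.one_apply, hc]
  have hb : (fun (b : Fin p → R) => (Matrix.of fun i (_ : Fin 1) => b i)) (fun i => T i 0) = T := by
    funext i j
    have hj : j = 0 := Subsingleton.elim j 0
    subst hj
    rfl
  exact hb ▸ mem_closure_of_mapsTo hp hf hmaps _

/-- Block embedding `X ↦ [[1, 0], [0, X]]`. -/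
def embed {p q : ℕ} (X : Matrix (Fin p) (Fin q) R) :
    Matrix (Fin (p + 1)) (Fin (q + 1)) R :=
  Matrix.of fun i j =>
    if hi : i = 0 then (if j = 0 then 1 else 0)
    else (if hj : j = 0 then 0 else X (i.pred hi) (j.pred hj))

theorem embed_zero_zero {p q : ℕ} (X : Matrix (Fin p) (Fin q) R) : embed X 0 0 = 1 := by
  simp [embed]

theorem embed_zero_succ {p q : ℕ} (X : Matrix (Fin p) (Fin q) R) (j : Fin q) :
    embed X 0 j.succ = 0 := by
  simp [embed, Fin.succ_ne_zero]

theorem embed_succ_zero {p q : ℕ} (X : Matrix (Fin p) (Fin q) R) (i : Fin p) :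
    embed X i.succ 0 = 0 := by
  simp [embed, Fin.succ_ne_zero]

theorem embed_succ_succ {p q : ℕ} (X : Matrix (Fin p) (Fin q) R) (i : Fin p) (j : Fin q) :
    embed X i.succ j.succ = X i j := by
  simp [embed, Fin.succ_ne_zero]

theorem continuous_embed {p q : ℕ} :
    Continuous fun X : Matrix (Fin p) (Fin q) R => embed X := by
  refine continuous_pi fun i => continuous_pi fun j => ?_
  by_cases hi : i = 0
  · simpa [embed, hi] using continuous_const
  · by_cases hj : j = 0
    · simpa [embed, hi, hj] using continuous_const
    · have : Continuous fun X : Matrix (Fin p) (Fin q) R => X (i.pred hi) (j.pred hj) :=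
        (continuous_apply _).comp (continuous_apply _)
      simpa [embed, hi, hj] using this

theorem embed_mapsTo {p q : ℕ} :
    Set.MapsTo (fun X : Matrix (Fin p) (Fin q) R => embed X) (LI R p q) (LI R (p + 1) (q + 1)) := by
  rintro X ⟨S, hS⟩
  refine ⟨embed S, ?_⟩
  funext i j
  rw [Matrix.mul_apply, Fin.sum_univ_succ]
  induction i using Fin.cases with
  | zero =>
    induction j using Fin.cases with
    | zero => simp [embed_zero_zero, embed_zero_succ, embed_succ_zero, Matrix.one_apply]
    | succ j => simp [embed_zero_zero, embed_zero_succ, embed_succ_zero, Matrix.one_apply,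
        (Fin.succ_ne_zero j).symm]
  | succ i =>
    induction j using Fin.cases with
    | zero => simp [embed_succ_zero, embed_zero_zero, embed_succ_succ, Fin.succ_ne_zero]
    | succ j =>
      have h1 : ∑ k : Fin p, embed S i.succ k.succ * embed X k.succ j.succ
          = ∑ k : Fin p, S i k * X k j := by
        refine Finset.sum_congr rfl fun k _ => ?_
        rw [embed_succ_succ, embed_succ_succ]
      have h2 : (S * X) i j = (1 : Matrix (Fin q) (Fin q) R) i j := by rw [hS]
      rw [Matrix.mul_apply] at h2
      simp [embed_succ_zero, embed_zero_succ, h1, h2, Matrix.one_apply, Fin.succ_inj]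

end Mat

section Step

variable {R : Type*} [Ring R] [TopologicalSpace R] [IsTopologicalRing R]

theorem step_transfer {p q : ℕ} (T T₁ T₂ T₃ : Matrix (Fin p) (Fin q) R)
    (N₁ N₂ : Matrix (Fin p) (Fin p) R) (N₃ : Matrix (Fin q) (Fin q) R)
    (hT₁ : T₁ = (1 + N₁) * T) (hT₂ : T₂ = (1 - N₂) * T₁) (hT₃ : T₃ = T₂ * (1 - N₃))
    (hN₁ : N₁ * N₁ = 0) (hN₂ : N₂ * N₂ = 0) (hN₃ : N₃ * N₃ = 0)
    (hmem : T₃ ∈ closure (LI R p q)) : T ∈ closure (LI R p q) := by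
  have hu1 := unit_of_sq_zero N₁ hN₁
  have hu2 := unit_of_sq_zero N₂ hN₂
  have hu3 := unit_of_sq_zero N₃ hN₃
  refine mem_closure_LI_conj ((1 - N₂) * (1 + N₁)) ((1 - N₁) * (1 + N₂)) (1 - N₃) (1 + N₃)
    ?_ ?_ hu3.2 hu3.1 ?_
  · calc (1 - N₂) * (1 + N₁) * ((1 - N₁) * (1 + N₂))
        = (1 - N₂) * ((1 + N₁) * (1 - N₁)) * (1 + N₂) := by simp only [Matrix.mul_assoc]
      _ = 1 := by rw [hu1.1, Matrix.mul_one, hu2.2]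
  · calc (1 - N₁) * (1 + N₂) * ((1 - N₂) * (1 + N₁))
        = (1 - N₁) * ((1 + N₂) * (1 - N₂)) * (1 + N₁) := by simp only [Matrix.mul_assoc]
      _ = 1 := by rw [hu2.1, Matrix.mul_one, hu1.2]
  · have heq : (1 - N₂) * (1 + N₁) * T * (1 - N₃) = T₃ := by
      rw [hT₃, hT₂, hT₁]
      exact congrArg (fun M => M * (1 - N₃)) (Matrix.mul_assoc (1 - N₂) (1 + N₁) T)
    rw [heq]
    exact hmem

theorem dense_LI_succ {p q : ℕ} (hLI : Dense (LI R p q)) (hLg : Dense (Lg R p)) :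
    Dense (LI R (p + 1) (q + 1)) := by
  set D : Set (Matrix (Fin (p + 1)) (Fin (q + 1)) R) :=
    {T | (fun i : Fin p => T i.succ 0) ∈ Lg R p} with hD
  -- Step 2 first: D ⊆ closure LI
  have hD_sub : D ⊆ closure (LI R (p + 1) (q + 1)) := by
    rintro T ⟨s, hs⟩
    -- data
    set c : Fin (p + 1) → R := fun i => T i 0 with hc
    set w : Fin (p + 1) → R := Fin.cons 0 (fun i => (1 - c 0) * s i) with hw
    set N₁ : Matrix (Fin (p + 1)) (Fin (p + 1)) R := rowU w with hN₁
    have hw0 : w 0 = 0 := by rw [hw]; exact Fin.cons_zero _ _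
    have hN₁sq := rowU_sq w hw0
    set T₁ : Matrix (Fin (p + 1)) (Fin (q + 1)) R := (1 + N₁) * T with hT₁
    have hT₁app : ∀ i j, T₁ i j = T i j + (if i = 0 then ∑ l, w l * T l j else 0) := by
      intro i j
      rw [hT₁, Matrix.add_mul, Matrix.one_mul, Matrix.add_apply, hN₁, rowU_mul]
    have hT₁succ : ∀ (i : Fin p) (j), T₁ i.succ j = T i.succ j := by
      intro i j
      rw [hT₁app]
      simp [Fin.succ_ne_zero]
    have hT₁00 : T₁ 0 0 = 1 := by
      rw [hT₁app]
      rw [if_pos rfl, Fin.sum_univ_succ]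
      have e1 : ∀ i : Fin p, w i.succ * T i.succ 0 = (1 - c 0) * (s i * T i.succ 0) := by
        intro i
        rw [hw, Fin.cons_succ, mul_assoc]
      rw [hw0, zero_mul, zero_add, Finset.sum_congr rfl fun i _ => e1 i, ← Finset.mul_sum, hs,
        mul_one]
      show c 0 + (1 - c 0) = 1
      rw [add_comm, sub_add_cancel]
    set u : Fin (p + 1) → R := Fin.cons 0 (fun i => T i.succ 0) with hu
    have hu0 : u 0 = 0 := by rw [hu]; exact Fin.cons_zero _ _
    set N₂ : Matrix (Fin (p + 1)) (Fin (p + 1)) R := colU u with hN₂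
    have hN₂sq := colU_sq u hu0
    set T₂ : Matrix (Fin (p + 1)) (Fin (q + 1)) R := (1 - N₂) * T₁ with hT₂
    have hT₂app : ∀ i j, T₂ i j = T₁ i j - u i * T₁ 0 j := by
      intro i j
      rw [hT₂, Matrix.sub_mul, Matrix.one_mul, Matrix.sub_apply, hN₂, colU_mul]
    have hT₂row0 : ∀ j, T₂ 0 j = T₁ 0 j := by
      intro j
      rw [hT₂app, hu0, zero_mul, sub_zero]
    have hT₂00 : T₂ 0 0 = 1 := by rw [hT₂row0, hT₁00]
    have hT₂succ0 : ∀ i : Fin p, T₂ i.succ 0 = 0 := by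
      intro i
      rw [hT₂app, hT₁succ, hT₁00, hu, Fin.cons_succ, mul_one, sub_self]
    set x : Fin (q + 1) → R := Fin.cons 0 (fun j => T₂ 0 j.succ) with hx
    have hx0 : x 0 = 0 := by rw [hx]; exact Fin.cons_zero _ _
    set N₃ : Matrix (Fin (q + 1)) (Fin (q + 1)) R := rowU x with hN₃
    have hN₃sq := rowU_sq x hx0
    set T₃ : Matrix (Fin (p + 1)) (Fin (q + 1)) R := T₂ * (1 - N₃) with hT₃
    have hT₃app : ∀ i j, T₃ i j = T₂ i j - T₂ i 0 * x j := by
      intro i j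
      rw [hT₃, Matrix.mul_sub, Matrix.mul_one, Matrix.sub_apply, hN₃, mul_rowU]
    -- identification with a block matrix
    set X : Matrix (Fin p) (Fin q) R := Matrix.of fun i j => T₂ i.succ j.succ with hX
    have hT₃embed : T₃ = embed X := by
      funext i j
      induction i using Fin.cases with
      | zero =>
        induction j using Fin.cases with
        | zero =>
          rw [hT₃app, hT₂00, hx0, mul_zero, sub_zero, embed_zero_zero]
        | succ j =>
          rw [hT₃app, hT₂00, one_mul, hx, Fin.cons_succ, sub_self, embed_zero_succ]
      | succ i =>
        induction j using Fin.cases with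
        | zero =>
          rw [hT₃app, hT₂succ0, hx0, mul_zero, sub_zero, embed_succ_zero]
        | succ j =>
          rw [hT₃app, hT₂succ0, zero_mul, sub_zero, embed_succ_succ]
          rfl
    -- T₃ is in the closure of LI
    have hT₃mem : T₃ ∈ closure (LI R (p + 1) (q + 1)) := by
      rw [hT₃embed]
      exact mem_closure_of_mapsTo hLI continuous_embed embed_mapsTo X
    -- transfer back to T
    refine step_transfer T T₁ T₂ T₃ N₁ N₂ N₃ hT₁ hT₂ hT₃ ?_ ?_ ?_ hT₃mem
    · rw [hN₁]; exact hN₁sq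
    · rw [hN₂]; exact hN₂sq
    · rw [hN₃]; exact hN₃sq
  -- Step 1: every T is in closure of D
  intro T
  set f : (Fin p → R) → Matrix (Fin (p + 1)) (Fin (q + 1)) R := fun a =>
    Matrix.of fun i j => if j = 0 then Fin.cons (α := fun _ => R) (T 0 0) a i else T i j with hfdef
  have hf : Continuous f := by
    refine continuous_pi fun i => continuous_pi fun j => ?_
    by_cases hj : j = 0
    · simp only [hfdef, Matrix.of_apply, hj, if_pos rfl]
      induction i using Fin.cases with
      | zero => simpa using continuous_const
      | succ i => simpa using continuous_apply i
    · simpa [hfdef, hj] using continuous_const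
  have hmaps : Set.MapsTo f (Lg R p) D := by
    rintro a ⟨s, hs⟩
    refine ⟨s, ?_⟩
    simpa [hfdef] using hs
  have hT : f (fun i => T i.succ 0) = T := by
    funext i j
    by_cases hj : j = 0
    · subst hj
      induction i using Fin.cases with
      | zero => simp [hfdef]
      | succ i => simp [hfdef]
    · simp [hfdef, hj]
  have hTD : T ∈ closure D := hT ▸ mem_closure_of_mapsTo hLg hf hmaps _
  have : closure D ⊆ closure (LI R (p + 1) (q + 1)) := by
    rw [← closure_closure (s := LI R (p + 1) (q + 1))]
    exact closure_mono hD_sub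
  exact this hTD

theorem dense_LI_of_dense_Lg {m : ℕ} (hm1 : 1 ≤ m) (hm : Dense (Lg R m)) :
    ∀ q p : ℕ, q + m ≤ p + 1 → Dense (LI R p q) := by
  intro q
  induction q with
  | zero => exact fun p _ => dense_LI_zero p
  | succ q ih =>
    intro p hpq
    match q, ih with
    | 0, _ =>
      exact dense_LI_one (dense_Lg_of_le hm (by omega))
    | (q' + 1), ih =>
      obtain ⟨p', rfl⟩ : ∃ p', p = p' + 1 := ⟨p - 1, by omega⟩
      exact dense_LI_succ (ih p' (by omega)) (dense_Lg_of_le hm (by omega))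

end Step

section TopLevel

variable {B : Type*} [CStarAlgebra B] (A : StarSubalgebra ℂ B)

theorem dense_Lg_B {n p : ℕ} (v : Fin n → B)
    (h : ∀ b : B, ∃ a : Fin n → A, b = ∑ i, (a i : B) * v i)
    (hLI : Dense (LI ↥A p n)) : Dense (Lg B p) := by
  obtain ⟨u, hu⟩ := h 1
  intro b
  set f : Matrix (Fin p) (Fin n) ↥A → (Fin p → B) := fun T k => ∑ l, (T k l : B) * v l with hf
  have hcont : Continuous f := by
    refine continuous_pi fun k => ?_
    refine continuous_finset_sum _ fun l _ => ?_
    exact (continuous_subtype_val.comp ((continuous_apply l).comp (continuous_apply k))).mul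
      continuous_const
  have hmaps : Set.MapsTo f (LI ↥A p n) (Lg B p) := by
    rintro T ⟨S, hS⟩
    refine ⟨fun k => ∑ j, (u j : B) * (S j k : B), ?_⟩
    have key : ∀ j l, (∑ k, (S j k : B) * (T k l : B)) = if j = l then (1 : B) else 0 := by
      intro j l
      have h1 : ((S * T) j l : B) = ((1 : Matrix (Fin n) (Fin n) ↥A) j l : B) := by rw [hS]
      rw [Matrix.mul_apply] at h1
      push_cast at h1
      rw [h1, Matrix.one_apply]
      split <;> simp
    have expand : ∀ k, (∑ j, (u j : B) * (S j k : B)) * f T k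
        = ∑ j, ∑ l, (u j : B) * ((S j k : B) * ((T k l : B) * v l)) := by
      intro k
      rw [Finset.sum_mul]
      refine Finset.sum_congr rfl fun j _ => ?_
      rw [hf, Finset.mul_sum]
      refine Finset.sum_congr rfl fun l _ => ?_
      rw [mul_assoc]
    calc ∑ k, (∑ j, (u j : B) * (S j k : B)) * f T k
        = ∑ k, ∑ j, ∑ l, (u j : B) * ((S j k : B) * ((T k l : B) * v l)) :=
          Finset.sum_congr rfl fun k _ => expand k
      _ = ∑ j, ∑ k, ∑ l, (u j : B) * ((S j k : B) * ((T k l : B) * v l)) := Finset.sum_comm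
      _ = ∑ j, ∑ l, ∑ k, (u j : B) * ((S j k : B) * ((T k l : B) * v l)) :=
          Finset.sum_congr rfl fun j _ => Finset.sum_comm
      _ = ∑ j, ∑ l, (u j : B) * ((∑ k, (S j k : B) * (T k l : B)) * v l) := by
          refine Finset.sum_congr rfl fun j _ => Finset.sum_congr rfl fun l _ => ?_
          rw [← Finset.mul_sum, Finset.sum_mul]
          refine congrArg _ (Finset.sum_congr rfl fun k _ => ?_)
          rw [mul_assoc]
      _ = ∑ j, (u j : B) * v j := by
          refine Finset.sum_congr rfl fun j _ => ?_
          rw [Finset.sum_congr rfl fun l _ => by rw [key j l]]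
          simp
      _ = 1 := hu.symm
  have hsurj : ∃ T, f T = b := by
    have := fun k => h (b k)
    choose a ha using this
    refine ⟨Matrix.of a, ?_⟩
    funext k
    exact (ha k).symm
  obtain ⟨T, hT⟩ := hsurj
  exact hT ▸ mem_closure_of_mapsTo hLI hcont hmaps T

end TopLevel

theorem tsr_le_of_dense {R : Type*} [Ring R] [TopologicalSpace R] {n : ℕ}
    (h : Dense (Lg R n)) : tsr R ≤ (n : ℕ∞) :=
  sInf_le ⟨n, rfl, h⟩

theorem dense_Lg_zero_of_trivial {R : Type*} [Ring R] [TopologicalSpace R]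
    (h01 : (0 : R) = 1) : Dense (Lg R 0) := by
  have : Lg R 0 = Set.univ := Set.eq_univ_of_forall fun b => ⟨0, by simpa using h01⟩
  rw [this]
  exact dense_univ

/-- If `1 ∈ A ⊆ B` and `B = Av₁ + ⋯ + Avₙ`, then `tsr B ≤ n · tsr A`. -/
theorem stmt_3 {B : Type*} [CStarAlgebra B] (A : StarSubalgebra ℂ B) (n : ℕ)
    (v : Fin n → B) (h : ∀ b : B, ∃ a : Fin n → A, b = ∑ i, (a i : B) * v i) :
    tsr B ≤ (n : ℕ∞) * tsr A := by
  rcases Nat.eq_zero_or_pos n with hn | hn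
  · -- n = 0 : B is trivial
    subst hn
    obtain ⟨a, ha⟩ := h 1
    have h01 : (0 : B) = 1 := by simpa using ha.symm
    exact le_trans (tsr_le_of_dense (dense_Lg_zero_of_trivial h01)) zero_le
  by_cases htop : tsr A = ⊤
  · rw [htop, ENat.mul_top (by exact_mod_cast hn.ne' : (n : ℕ∞) ≠ 0)]
    exact le_top
  -- tsr A = m < ⊤ : choose k ≤ m with Dense (Lg A k)
  obtain ⟨m, hm⟩ := WithTop.ne_top_iff_exists.mp htop
  have hlt : sInf {N : ℕ∞ | ∃ k : ℕ, (k : ℕ∞) = N ∧ Dense (Lg (↥A) k)} < (m : ℕ∞) + 1 := by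
    have : tsr A < (m : ℕ∞) + 1 := by
      rw [← hm]
      exact ENat.lt_add_one_iff (by simp) |>.mpr le_rfl
    exact this
  obtain ⟨N, hN, hNlt⟩ := sInf_lt_iff.mp hlt
  obtain ⟨k, rfl, hk⟩ := hN
  have hkm : (k : ℕ∞) ≤ tsr A := by
    rw [← hm]
    have h2 : k < m + 1 := by
      have := ENat.coe_lt_coe.mp (by push_cast; exact_mod_cast hNlt)
      omega
    exact ENat.coe_le_coe.mpr (Nat.lt_succ_iff.mp h2)
  rcases Nat.eq_zero_or_pos k with hk0 | hk0
  · -- k = 0 : A (hence B) is trivial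
    subst hk0
    have hne : (Lg (↥A) 0).Nonempty := hk.nonempty
    obtain ⟨a, c, hc⟩ := hne
    have h01A : (0 : ↥A) = 1 := by simpa using hc
    have h01 : (0 : B) = 1 := by
      have := congrArg (Subtype.val) h01A
      simpa using this
    exact le_trans (tsr_le_of_dense (dense_Lg_zero_of_trivial h01)) zero_le
  -- main case
  have hcond : n + k ≤ n * k + 1 := by nlinarith
  have hLI : Dense (LI (↥A) (n * k) n) :=
    dense_LI_of_dense_Lg hk0 hk n (n * k) hcond
  have hB : Dense (Lg B (n * k)) := dense_Lg_B A v h hLI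
  calc tsr B ≤ ((n * k : ℕ) : ℕ∞) := tsr_le_of_dense hB
    _ = (n : ℕ∞) * (k : ℕ∞) := by push_cast; rfl
    _ ≤ (n : ℕ∞) * tsr A := mul_le_mul_right hkm _
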